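/- Properties of the vertex sequence: For every sufficiently large integer i ≥ 1, the limit v_i = lim_{s→0} q_i(s) exists (the two one-sided limits as s → 0⁺ and s → 0⁻ agree); moreover v_i < 0 for every such i, lim_{i→∞} v_i = 0, and there exists a constant p > 0 such that lim_{i→∞} i·v_i = −p. -/

import Mathlib

open Set Filter Topology

/-- `T_i(s) = (2πi + β − α + s)/a + R − 1`. -/
noncomputable def Tfun (a R α β : ℝ) (i : ℕ) (s : ℝ) : ℝ :=
  (2 * Real.pi * i + β - α + s) / a + R - 1

/-- `q_i(s) = s² · tan((s²/R²)·T_i(s) − arctan(R/s²))`. -/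
noncomputable def qfun (a R α β : ℝ) (i : ℕ) (s : ℝ) : ℝ :=
  s ^ 2 * Real.tan ((s ^ 2 / R ^ 2) * Tfun a R α β i s - Real.arctan (R / s ^ 2))

lemma sinq : Tendsto (fun x : ℝ => Real.sin x / x) (𝓝[≠] 0) (𝓝 1) := by
  have h := Real.hasDerivAt_sin 0
  rw [hasDerivAt_iff_tendsto_slope] at h
  simp only [Real.cos_zero] at h
  refine h.congr fun x => ?_
  simp [slope_def_field]

lemma ddc (x y t : ℝ) (ht : t ≠ 0) : (x / t) / (y / t) = x / y := by
  rcases eq_or_ne y 0 with h | h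
  · simp [h]
  · field_simp

/-- **Properties of the vertex sequence** `v_i = lim_{s→0} q_i(s)`. -/
theorem vertex_sequence_properties (a R α β : ℝ)
    (ha : 0 < a) (hR0 : 0 < R) (hR1 : R < 1)
    (hα : α ∈ Set.Ico 0 (2 * Real.pi)) (hβ : β ∈ Set.Ico 0 (2 * Real.pi)) :
    ∃ N : ℕ, ∃ v : ℕ → ℝ,
      (∀ i : ℕ, N ≤ i →
        Tendsto (fun s => qfun a R α β i s) (𝓝[≠] (0 : ℝ)) (𝓝 (v i)) ∧ v i < 0) ∧
      Tendsto v atTop (𝓝 0) ∧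
      ∃ p : ℝ, 0 < p ∧ Tendsto (fun i : ℕ => (i : ℝ) * v i) atTop (𝓝 (-p)) := by
  obtain ⟨hα0, hα2⟩ := hα
  obtain ⟨hβ0, hβ2⟩ := hβ
  have hπ := Real.pi_gt_three
  have hRne : R ≠ 0 := ne_of_gt hR0
  set c : ℕ → ℝ := fun i => (2 * Real.pi * i + β - α) / a + R - 1 with hcdef
  have hcN : ∀ i : ℕ, ⌈a⌉₊ + 1 ≤ i → 0 < c i := by
    intro i hi
    have h1 : (⌈a⌉₊ : ℝ) + 1 ≤ (i : ℝ) := by exact_mod_cast hi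
    have h2 : a ≤ (⌈a⌉₊ : ℝ) := Nat.le_ceil a
    have h3 : 2 * Real.pi * a ≤ 2 * Real.pi * i + β - α := by nlinarith
    have h4 : 2 * Real.pi ≤ (2 * Real.pi * i + β - α) / a := by
      rw [le_div_iff₀ ha]; linarith
    simp only [hcdef]; nlinarith
  have heq : ∀ i : ℕ, 1 + c i / R =
      (2 * Real.pi / (a * R)) * i + (1 + ((β - α) / a + R - 1) / R) := by
    intro i; simp only [hcdef]; field_simp; ring
  have hd : Tendsto (fun i : ℕ => 1 + c i / R) atTop atTop := by
    simp only [heq]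
    apply tendsto_atTop_add_const_right
    exact tendsto_natCast_atTop_atTop.const_mul_atTop (by positivity)
  refine ⟨⌈a⌉₊ + 1, fun i => -R / (1 + c i / R), fun i hi => ?_, ?_, ?_⟩
  · -- per-i limit
    have hci : 0 < c i := hcN i hi
    have hden_pos : 0 < 1 + c i / R := by positivity
    set A : ℝ → ℝ := fun s => (s ^ 2 / R ^ 2) * Tfun a R α β i s with hAdef
    have hTeq : ∀ s : ℝ, Tfun a R α β i s = c i + s / a := by
      intro s; simp only [Tfun, hcdef]; field_simp; ring
    have hTcont : Continuous (Tfun a R α β i) := by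
      unfold Tfun; fun_prop
    have hAcont : Continuous A := by
      simp only [hAdef]; fun_prop
    have hA0 : Tendsto A (𝓝[≠] (0:ℝ)) (𝓝 0) := by
      have := hAcont.tendsto 0
      simp only [hAdef, hTeq] at this ⊢
      norm_num at this
      exact this.mono_left nhdsWithin_le_nhds
    have hTpos : ∀ᶠ s in 𝓝[≠] (0:ℝ), 0 < Tfun a R α β i s := by
      have h := hTcont.tendsto 0
      rw [hTeq 0] at h; norm_num at h
      exact (h.eventually (eventually_gt_nhds hci)).filter_mono nhdsWithin_le_nhds
    have hAne : ∀ᶠ s in 𝓝[≠] (0:ℝ), A s ≠ 0 := by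
      filter_upwards [hTpos, self_mem_nhdsWithin] with s hsp hs0
      have hs0' : s ≠ 0 := hs0
      have : 0 < A s := by
        simp only [hAdef]
        positivity
      exact ne_of_gt this
    have hA : Tendsto A (𝓝[≠] (0:ℝ)) (𝓝[≠] (0:ℝ)) := by
      rw [tendsto_nhdsWithin_iff]
      exact ⟨hA0, hAne.mono fun s h => h⟩
    have hsinA : Tendsto (fun s => Real.sin (A s) / A s) (𝓝[≠] (0:ℝ)) (𝓝 1) :=
      sinq.comp hA
    have hcosA : Tendsto (fun s => Real.cos (A s)) (𝓝[≠] (0:ℝ)) (𝓝 1) := by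
      have := (Real.continuous_cos.tendsto 0).comp hA0
      rw [Real.cos_zero] at this; exact this
    have hsinA0 : Tendsto (fun s => Real.sin (A s)) (𝓝[≠] (0:ℝ)) (𝓝 0) := by
      have := (Real.continuous_sin.tendsto 0).comp hA0
      rw [Real.sin_zero] at this; exact this
    have hs2 : Tendsto (fun s : ℝ => s ^ 2) (𝓝[≠] (0:ℝ)) (𝓝 0) := by
      have : Tendsto (fun s : ℝ => s ^ 2) (𝓝 0) (𝓝 0) := by
        have := (continuous_pow 2).tendsto (0:ℝ); simpa using this
      exact this.mono_left nhdsWithin_le_nhds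
    have hTlim : Tendsto (fun s => Tfun a R α β i s / R ^ 2) (𝓝[≠] (0:ℝ))
        (𝓝 (c i / R ^ 2)) := by
      have := (hTcont.tendsto 0).div_const (R ^ 2)
      rw [hTeq 0] at this; norm_num at this
      exact this.mono_left nhdsWithin_le_nhds
    have hnum : Tendsto (fun s => s ^ 2 * Real.sin (A s) - R * Real.cos (A s))
        (𝓝[≠] (0:ℝ)) (𝓝 (-R)) := by
      have := (hs2.mul hsinA0).sub (hcosA.const_mul R)
      norm_num at this
      exact this
    have hden : Tendsto
        (fun s => Real.cos (A s) + R * (Real.sin (A s) / A s) * (Tfun a R α β i s / R ^ 2))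
        (𝓝[≠] (0:ℝ)) (𝓝 (1 + c i / R)) := by
      have h := hcosA.add ((hsinA.const_mul R).mul hTlim)
      have he : (1 : ℝ) + R * 1 * (c i / R ^ 2) = 1 + c i / R := by
        field_simp
      rwa [he] at h
    have key : ∀ s : ℝ, s ≠ 0 → qfun a R α β i s =
        (s ^ 2 * Real.sin (A s) - R * Real.cos (A s)) /
        (Real.cos (A s) + R * (Real.sin (A s) / A s) * (Tfun a R α β i s / R ^ 2)) := by
      intro s hs
      have hs2ne : s ^ 2 ≠ 0 := pow_ne_zero 2 hs
      set u : ℝ := R / s ^ 2 with hudef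
      have hu : u * s ^ 2 = R := div_mul_cancel₀ _ hs2ne
      set t : ℝ := Real.sqrt (1 + u ^ 2) with htdef
      have ht : t ≠ 0 := by
        have : (0:ℝ) < 1 + u ^ 2 := by positivity
        simp only [htdef]
        positivity
      have hstep : R * (Real.sin (A s) / A s) * (Tfun a R α β i s / R ^ 2)
          = u * Real.sin (A s) := by
        rcases eq_or_ne (Tfun a R α β i s) 0 with hT | hT
        · have hA0' : A s = 0 := by simp [hAdef, hT]
          simp [hA0', hT]
        · have hA2 : A s * R ^ 2 = s ^ 2 * Tfun a R α β i s := by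
            simp only [hAdef]; field_simp
          calc R * (Real.sin (A s) / A s) * (Tfun a R α β i s / R ^ 2)
              = Real.sin (A s) * (R * Tfun a R α β i s / (A s * R ^ 2)) := by ring
            _ = Real.sin (A s) * (R * Tfun a R α β i s / (s ^ 2 * Tfun a R α β i s)) := by
                rw [hA2]
            _ = Real.sin (A s) * (R / s ^ 2) := by
                rw [mul_div_mul_right _ _ hT]
            _ = u * Real.sin (A s) := by rw [hudef]; ring
      rw [qfun, Real.tan_eq_sin_div_cos, Real.sin_sub, Real.cos_sub,
        Real.sin_arctan, Real.cos_arctan, hstep]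
      have e1 : Real.sin (A s) * (1 / Real.sqrt (1 + (R / s ^ 2) ^ 2)) -
          Real.cos (A s) * (R / s ^ 2 / Real.sqrt (1 + (R / s ^ 2) ^ 2)) =
          (Real.sin (A s) - u * Real.cos (A s)) / t := by
        simp only [htdef, hudef]; ring
      have e2 : Real.cos (A s) * (1 / Real.sqrt (1 + (R / s ^ 2) ^ 2)) +
          Real.sin (A s) * (R / s ^ 2 / Real.sqrt (1 + (R / s ^ 2) ^ 2)) =
          (Real.cos (A s) + u * Real.sin (A s)) / t := by
        simp only [htdef, hudef]; ring
      rw [show ((s ^ 2 / R ^ 2) * Tfun a R α β i s) = A s from rfl, e1, e2, ddc _ _ _ ht,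
        ← mul_div_assoc]
      congr 1
      linear_combination (-Real.cos (A s)) * hu
    have hfin := hnum.div hden (ne_of_gt hden_pos)
    refine ⟨hfin.congr' ?_, div_neg_of_neg_of_pos (neg_lt_zero.mpr hR0) hden_pos⟩
    filter_upwards [self_mem_nhdsWithin] with s hs
    exact (key s hs).symm
  · -- v → 0
    have h1 := hd.inv_tendsto_atTop
    have h2 := h1.const_mul (-R)
    rw [mul_zero] at h2
    refine h2.congr fun i => ?_
    simp [div_eq_mul_inv]
  · -- i * v i → -p
    refine ⟨a * R ^ 2 / (2 * Real.pi), by positivity, ?_⟩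
    set m : ℝ := 2 * Real.pi / (a * R) with hmdef
    set e : ℝ := 1 + ((β - α) / a + R - 1) / R with hedef
    have hm : 0 < m := by positivity
    have h0 : Tendsto (fun i : ℕ => e / i) atTop (𝓝 0) :=
      tendsto_const_div_atTop_nhds_zero_nat e
    have h1 : Tendsto (fun i : ℕ => m + e / i) atTop (𝓝 m) := by
      simpa using tendsto_const_nhds.add h0
    have h2 := h1.inv₀ (ne_of_gt hm)
    have h3 := h2.const_mul (-R)
    have hval : -R * m⁻¹ = -(a * R ^ 2 / (2 * Real.pi)) := by
      rw [hmdef]; field_simp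
    rw [hval] at h3
    refine h3.congr' ?_
    filter_upwards [eventually_ge_atTop 1] with i hi1
    have hi0 : (i : ℝ) ≠ 0 := by
      have : (1:ℝ) ≤ (i:ℝ) := by exact_mod_cast hi1
      linarith
    rw [heq i, show m + e / (i:ℝ) = (m * i + e) / i by field_simp, inv_div]
    ring
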